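/- Every γ-set of reals has strong measure zero: if every open ω-cover of a set of reals X contains a γ-subcover, then X has strong measure zero. -/

import Mathlib

open Filter Set Cardinal

/-- The Rothberger property `S1(O,O)`: for every sequence of open covers one can select one
member from each so that the selections form a cover. -/
def RothbergerProp (X : Type*) [TopologicalSpace X] : Prop :=
  ∀ U : ℕ → Set (Set X),
    (∀ n, (∀ s ∈ U n, IsOpen s) ∧ ⋃₀ U n = Set.univ) →
    ∃ f : ℕ → Set X, (∀ n, f n ∈ U n) ∧ (⋃ n, f n) = Set.univ

/-- The Hurewicz property `Ufin(O,Γ)`: for every sequence of open covers one can select finite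
subfamilies whose unions form a γ-cover (every point is in all but finitely many of them). -/
def HurewiczProp (X : Type*) [TopologicalSpace X] : Prop :=
  ∀ U : ℕ → Set (Set X),
    (∀ n, (∀ s ∈ U n, IsOpen s) ∧ ⋃₀ U n = Set.univ) →
    ∃ F : ℕ → Set (Set X), (∀ n, F n ⊆ U n ∧ (F n).Finite) ∧
      ∀ x : X, ∀ᶠ n in atTop, x ∈ ⋃₀ F n

/-- The Menger property `Ufin(O,O)`. -/
def MengerProp (X : Type*) [TopologicalSpace X] : Prop :=
  ∀ U : ℕ → Set (Set X),
    (∀ n, (∀ s ∈ U n, IsOpen s) ∧ ⋃₀ U n = Set.univ) →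
    ∃ F : ℕ → Set (Set X), (∀ n, F n ⊆ U n ∧ (F n).Finite) ∧
      (⋃ n, ⋃₀ F n) = Set.univ

/-- The Gerlits–Nagy property `(*)_GN` = Rothberger + Hurewicz
(Kočinac–Scheepers characterization). -/
def GerlitsNagy (X : Type*) [TopologicalSpace X] : Prop :=
  RothbergerProp X ∧ HurewiczProp X

/-- Strong measure zero: for every sequence of positive reals `ε n` there is a cover
`A n` with `diam (A n) < ε n`. -/
def StrongMeasureZero (X : Type*) [PseudoMetricSpace X] : Prop :=
  ∀ ε : ℕ → ℝ, (∀ n, 0 < ε n) →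
    ∃ A : ℕ → Set X, (⋃ n, A n) = Set.univ ∧ ∀ n, EMetric.diam (A n) < ENNReal.ofReal (ε n)

/-- The bounding number `b`: least cardinality of an unbounded family in `(ℕ → ℕ, ≤*)`. -/
noncomputable def boundingNumber : Cardinal :=
  sInf { c : Cardinal | ∃ F : Set (ℕ → ℕ), #F = c ∧
    ∀ g : ℕ → ℕ, ∃ f ∈ F, ¬ ∀ᶠ n in atTop, f n ≤ g n }

/-- `cov(M)`: least cardinality of a family of meager sets of reals covering `ℝ`. -/
noncomputable def covMeager : Cardinal :=
  sInf { c : Cardinal | ∃ S : Set (Set ℝ), #S = c ∧ (∀ A ∈ S, IsMeagre A) ∧ ⋃₀ S = Set.univ }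

/-- `add(M)`: least cardinality of a family of meager sets of reals whose union is not meager. -/
noncomputable def addMeager : Cardinal :=
  sInf { c : Cardinal | ∃ S : Set (Set ℝ), #S = c ∧ (∀ A ∈ S, IsMeagre A) ∧ ¬ IsMeagre (⋃₀ S) }

/-- An ω-cover: `Set.univ ∉ U` and every finite set is contained in some member of `U`. -/
def IsOmegaCover {X : Type*} (U : Set (Set X)) : Prop :=
  Set.univ ∉ U ∧ ∀ F : Set X, F.Finite → ∃ u ∈ U, F ⊆ u

/-- A γ-cover: an infinite family such that every point belongs to all but finitely many members. -/
def IsGammaCover {X : Type*} (U : Set (Set X)) : Prop :=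
  U.Infinite ∧ ∀ x : X, {u ∈ U | x ∉ u}.Finite

/-- A family `U` is groupable (`U ∈ Ω^gp`) if it admits a partition into finite sets such that
every finite `F ⊆ X` is contained in a member of all but finitely many pieces. -/
def IsGroupable {X : Type*} (U : Set (Set X)) : Prop :=
  ∃ P : Set (Set (Set X)),
    (∀ G ∈ P, G.Finite ∧ G.Nonempty) ∧ P.PairwiseDisjoint id ∧ ⋃₀ P = U ∧
    ∀ F : Set X, F.Finite → {G ∈ P | ¬ ∃ u ∈ G, F ⊆ u}.Finite

/-- The selection property `S1(Ω, Ω^gp)`. -/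
def S1OmegaOmegaGp (X : Type*) [TopologicalSpace X] : Prop :=
  ∀ U : ℕ → Set (Set X),
    (∀ n, (∀ s ∈ U n, IsOpen s) ∧ IsOmegaCover (U n)) →
    ∃ f : ℕ → Set X, (∀ n, f n ∈ U n) ∧
      IsOmegaCover (Set.range f) ∧ IsGroupable (Set.range f)

/-- A γ-set: every open ω-cover contains a γ-subcover. -/
def IsGammaSet (X : Type*) [TopologicalSpace X] : Prop :=
  ∀ U : Set (Set X), (∀ s ∈ U, IsOpen s) → IsOmegaCover U →
    ∃ V ⊆ U, IsGammaCover V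

section GSAux

noncomputable def gsDelta (ε : ℕ → ℝ) : ℕ → ℝ
  | 0 => ε 0 / 3
  | n + 1 => min (gsDelta ε n) (ε (n + 1) / 3)

lemma gsDelta_pos {ε : ℕ → ℝ} (hε : ∀ n, 0 < ε n) : ∀ n, 0 < gsDelta ε n := by
  intro n
  induction n with
  | zero => exact div_pos (hε 0) (by norm_num)
  | succ n ih => exact lt_min ih (div_pos (hε _) (by norm_num))

lemma gsDelta_le {ε : ℕ → ℝ} : ∀ n, gsDelta ε n ≤ ε n / 3 := by
  intro n
  cases n with
  | zero => exact le_rfl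
  | succ n => exact min_le_right _ _

lemma gsDelta_anti {ε : ℕ → ℝ} {m n : ℕ} (hmn : m ≤ n) : gsDelta ε n ≤ gsDelta ε m := by
  induction n with
  | zero => simp [Nat.le_zero.mp hmn]
  | succ n ih =>
    rcases Nat.eq_or_lt_of_le hmn with h | h
    · subst h; exact le_rfl
    · exact le_trans (min_le_left _ _) (ih (Nat.lt_succ_iff.mp h))

def gsForm {Y : Type*} [MetricSpace Y] (δ : ℕ → ℝ) (x : ℕ → Y) (n : ℕ) (L : List Y) : Set Y :=
  (⋃ y ∈ L, Metric.ball y (δ (n + L.length))) \ {x n}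

lemma gsForm_isOpen {Y : Type*} [MetricSpace Y] (δ : ℕ → ℝ) (x : ℕ → Y) (n : ℕ) (L : List Y) :
    IsOpen (gsForm δ x n L) :=
  (isOpen_biUnion fun _ _ => Metric.isOpen_ball).sdiff isClosed_singleton

lemma gsForm_tag_not_mem {Y : Type*} [MetricSpace Y] (δ : ℕ → ℝ) (x : ℕ → Y) (n : ℕ)
    (L : List Y) : x n ∉ gsForm δ x n L := fun hx => hx.2 rfl

/-- An auxiliary recursion: choose a sequence with rapidly increasing tags. -/
lemma gs_exists_seq {α : Type*} {V : Set α} (g m : α → ℕ)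
    (hgm : ∀ w, g w ≤ m w) (hstep : ∀ M, ∃ w, w ∈ V ∧ M < g w) :
    ∃ W : ℕ → α, (∀ k, W k ∈ V) ∧ ∀ k k', k < k' → m (W k) < g (W k') := by
  choose f hf1 hf2 using hstep
  refine ⟨fun k => Nat.rec (f 0) (fun _ prev => f (m prev)) k, ?_, ?_⟩
  · intro k; cases k with
    | zero => exact hf1 0
    | succ k => exact hf1 _
  · intro k k' hlt
    induction k' with
    | zero => omega
    | succ k'' ih =>
      have hsucc : m (Nat.rec (motive := fun _ => α) (f 0)
          (fun _ prev => f (m prev)) k'') <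
          g (Nat.rec (motive := fun _ => α) (f 0) (fun _ prev => f (m prev)) (k'' + 1)) :=
        hf2 _
      rcases Nat.lt_succ_iff_lt_or_eq.mp hlt with h | h
      · exact lt_of_le_of_lt (le_trans (le_of_lt (ih h)) (hgm _)) hsucc
      · subst h; exact hsucc

end GSAux

/-- every γ-set of reals has strong measure zero. -/
theorem strongMeasureZero_of_gammaSet (X : Set ℝ) (h : IsGammaSet ↥X) :
    StrongMeasureZero ↥X := by
  classical
  intro ε hε
  cases finite_or_infinite ↥X with
  | inl hfin =>
    cases isEmpty_or_nonempty ↥X with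
    | inl he =>
      refine ⟨fun _ => ∅, ?_, fun n => ?_⟩
      · have : (Set.univ : Set ↥X) = ∅ := Set.univ_eq_empty_iff.mpr he
        simp [this]
      · simpa [EMetric.diam] using ENNReal.ofReal_pos.mpr (hε n)
    | inr hne =>
      obtain ⟨f, hf⟩ := exists_surjective_nat ↥X
      refine ⟨fun n => {f n}, ?_, fun n => ?_⟩
      · apply Set.eq_univ_of_forall
        intro p
        obtain ⟨n, rfl⟩ := hf p
        exact Set.mem_iUnion.mpr ⟨n, rfl⟩
      · simpa [EMetric.diam] using ENNReal.ofReal_pos.mpr (hε n)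
  | inr hinf =>
    set δ : ℕ → ℝ := gsDelta ε with hδdef
    have hδ0 : ∀ n, 0 < δ n := gsDelta_pos hε
    have hδε : ∀ n, δ n ≤ ε n / 3 := fun n => gsDelta_le n
    have hδanti : ∀ {m n : ℕ}, m ≤ n → δ n ≤ δ m := fun hmn => gsDelta_anti hmn
    obtain ⟨x, hx⟩ : ∃ x : ℕ → ↥X, Function.Injective x :=
      ⟨fun n => (Infinite.natEmbedding ↥X) n, (Infinite.natEmbedding ↥X).injective⟩
    -- the ω-cover
    set U : Set (Set ↥X) := {u | ∃ n L, u = gsForm δ x n L} with hUdef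
    have hUopen : ∀ s ∈ U, IsOpen s := by
      rintro s ⟨n, L, rfl⟩
      exact gsForm_isOpen δ x n L
    have hUomega : IsOmegaCover U := by
      constructor
      · rintro ⟨n, L, hform⟩
        have : x n ∈ (Set.univ : Set ↥X) := Set.mem_univ _
        rw [hform] at this
        exact gsForm_tag_not_mem δ x n L this
      · intro G hG
        -- choose n with x n ∉ G
        have hpre : {i | x i ∈ G}.Finite := Set.Finite.preimage hx.injOn hG
        obtain ⟨n, hn⟩ := hpre.infinite_compl.nonempty
        refine ⟨gsForm δ x n hG.toFinset.toList, ⟨n, _, rfl⟩, ?_⟩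
        intro g hg
        have hgl : g ∈ hG.toFinset.toList := by
          rw [Finset.mem_toList, Set.Finite.mem_toFinset]; exact hg
        constructor
        · exact Set.mem_biUnion hgl (Metric.mem_ball_self (hδ0 _))
        · intro hgx
          apply hn
          simp only [Set.mem_setOf_eq]
          rw [Set.mem_singleton_iff] at hgx
          rwa [← hgx]
    obtain ⟨V, hVsub, hVinf, hγ⟩ := h U hUopen hUomega
    -- decode V
    have hdec : ∀ u : Set ↥X, ∃ p : ℕ × List ↥X, u ∈ V → u = gsForm δ x p.1 p.2 := by
      intro u
      by_cases hu : u ∈ V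
      · obtain ⟨n, L, hf⟩ := hVsub hu
        exact ⟨(n, L), fun _ => hf⟩
      · exact ⟨(0, []), fun hc => absurd hc hu⟩
    choose dec hdecs using hdec
    set g : Set ↥X → ℕ := fun u => (dec u).1 with hgdef
    set m : Set ↥X → ℕ := fun u => (dec u).1 + (dec u).2.length with hmdef
    have hxnot : ∀ u ∈ V, x (g u) ∉ u := by
      intro u hu hmem
      refine gsForm_tag_not_mem δ x (dec u).1 (dec u).2 ?_
      rw [← hdecs u hu]
      exact hmem
    have hfinM : ∀ M, {w | w ∈ V ∧ g w ≤ M}.Finite := by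
      intro M
      have : {w | w ∈ V ∧ g w ≤ M} ⊆ ⋃ n ∈ Set.Iic M, {u | u ∈ V ∧ x n ∉ u} := by
        rintro w ⟨hwV, hle⟩
        exact Set.mem_biUnion hle ⟨hwV, hxnot w hwV⟩
      exact (Set.Finite.biUnion (Set.finite_Iic M) fun n _ => hγ (x n)).subset this
    have hstep : ∀ M, ∃ w, w ∈ V ∧ M < g w := by
      intro M
      by_contra hc
      push_neg at hc
      exact hVinf ((hfinM M).subset fun w hw => ⟨hw, hc w hw⟩)
    obtain ⟨W, hWV, hWgrow⟩ := gs_exists_seq g m (fun w => Nat.le_add_right _ _) hstep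
    have hWform : ∀ k, W k = gsForm δ x (g (W k)) (dec (W k)).2 := fun k =>
      hdecs (W k) (hWV k)
    have hgm : ∀ w, g w ≤ m w := fun w => Nat.le_add_right _ _
    have hmval : ∀ w, m w = g w + (dec w).2.length := fun _ => rfl
    have hWinj : Function.Injective W := by
      intro a b hab
      rcases lt_trichotomy a b with hab' | hab' | hab'
      · have h1 := hWgrow a b hab'
        rw [hab] at h1
        have h2 := hgm (W b)
        omega
      · exact hab'
      · have h1 := hWgrow b a hab'
        rw [hab] at h1
        have h2 := hgm (W b)
        omega
    -- block uniqueness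
    have huniq : ∀ j k k', g (W k) < j → j ≤ m (W k) → g (W k') < j → j ≤ m (W k') →
        k = k' := by
      intro j k k' h1 h2 h3 h4
      have h6 := hgm (W k)
      have h7 := hgm (W k')
      rcases lt_trichotomy k k' with hc | hc | hc
      · have h5 := hWgrow k k' hc; omega
      · exact hc
      · have h5 := hWgrow k' k hc; omega
    -- the cover
    set A : ℕ → Set ↥X := fun j =>
      if hj : ∃ k, g (W k) < j ∧ j ≤ m (W k) then
        Metric.ball ((dec (W (Nat.find hj))).2.getD (j - g (W (Nat.find hj)) - 1) (x 0))
          (δ (m (W (Nat.find hj)))) else ∅ with hAdef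
    refine ⟨A, ?_, ?_⟩
    · apply Set.eq_univ_of_forall
      intro p
      rw [Set.mem_iUnion]
      -- p belongs to some W k
      have hpk : ∃ k, p ∈ W k := by
        by_contra hc
        push_neg at hc
        have : {u | u ∈ V ∧ p ∉ u}.Infinite :=
          Set.infinite_of_injective_forall_mem hWinj fun k => ⟨hWV k, hc k⟩
        exact this (hγ p)
      obtain ⟨k, hpW⟩ := hpk
      have hpball : p ∈ ⋃ y ∈ (dec (W k)).2, Metric.ball y (δ (g (W k) + (dec (W k)).2.length)) := by
        have h1 : p ∈ gsForm δ x (g (W k)) (dec (W k)).2 := by rw [← hWform k]; exact hpW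
        exact h1.1
      rw [Set.mem_iUnion₂] at hpball
      obtain ⟨y, hyL, hpy⟩ := hpball
      obtain ⟨i, hi, hiy⟩ := List.mem_iff_getElem.mp hyL
      refine ⟨g (W k) + i + 1, ?_⟩
      have hj : ∃ k', g (W k') < g (W k) + i + 1 ∧ g (W k) + i + 1 ≤ m (W k') :=
        ⟨k, by omega, by rw [hmval]; omega⟩
      have hfindk : Nat.find hj = k := by
        have hspec := Nat.find_spec hj
        exact huniq (g (W k) + i + 1) (Nat.find hj) k hspec.1 hspec.2 (by omega)
          (by rw [hmval]; omega)
      rw [hAdef]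
      simp only [dif_pos hj, hfindk]
      have hidx : g (W k) + i + 1 - g (W k) - 1 = i := by omega
      rw [hidx, List.getD_eq_getElem _ _ hi, hiy]
      exact hpy
    · intro j
      rw [hAdef]
      by_cases hj : ∃ k, g (W k) < j ∧ j ≤ m (W k)
      · simp only [dif_pos hj]
        have hspec := Nat.find_spec hj
        set K := Nat.find hj
        have hδle : δ (m (W K)) ≤ ε j / 3 :=
          le_trans (hδanti hspec.2) (hδε j)
        calc EMetric.diam (Metric.ball ((dec (W K)).2.getD (j - g (W K) - 1) (x 0))
              (δ (m (W K))))
            ≤ 2 * ENNReal.ofReal (δ (m (W K))) := by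
              rw [← Metric.emetric_ball]; exact EMetric.diam_ball
          _ ≤ 2 * ENNReal.ofReal (ε j / 3) := by
              exact mul_le_mul_right (ENNReal.ofReal_le_ofReal hδle) 2
          _ < ENNReal.ofReal (ε j) := by
              rw [show (2 : ENNReal) = ENNReal.ofReal 2 by simp, ← ENNReal.ofReal_mul (by norm_num)]
              exact (ENNReal.ofReal_lt_ofReal_iff (hε j)).mpr (by linarith [hε j])
      · simp only [dif_neg hj]
        simpa [EMetric.diam] using ENNReal.ofReal_pos.mpr (hε j)
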